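/- Let n ≥ 1 and let p_1, …, p_{n+1} be pairwise distinct propositional constants. The formula ⋀_{i=1}^{n} EX(¬p_i ∧ p_{i+1}) ∧ ⋀_{i=1}^{n} AX(¬p_i ∨ p_{i+1}) is a satisfiable CTL* formula, and in every transition system T with a state s such that T, s satisfies this formula, the state s has at least n distinct successors. -/
import Mathlib


/-- Branching-time formulas in negation normal form. -/
inductive Form : Type where
  | tt : Form
  | ff : Form
  | prop : ℕ → Form
  | nprop : ℕ → Form
  | or : Form → Form → Form
  | and : Form → Form → Form
  | next : Form → Form
  | unt : Form → Form → Form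
  | rel : Form → Form → Form
  | ex : Form → Form
  | al : Form → Form
deriving DecidableEq

namespace Form

/-- The set of subformulas of a formula. -/
def subf : Form → Finset Form
  | .tt => {.tt}
  | .ff => {.ff}
  | .prop p => {.prop p}
  | .nprop p => {.nprop p}
  | .or a b => insert (.or a b) (a.subf ∪ b.subf)
  | .and a b => insert (.and a b) (a.subf ∪ b.subf)
  | .next a => insert (.next a) a.subf
  | .unt a b => insert (.unt a b) (a.subf ∪ b.subf)
  | .rel a b => insert (.rel a b) (a.subf ∪ b.subf)
  | .ex a => insert (.ex a) a.subf
  | .al a => insert (.al a) a.subf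

/-- Literals are `tt`, `ff`, `p` and `¬p`. -/
def IsLiteral : Form → Prop
  | .tt => True
  | .ff => True
  | .prop _ => True
  | .nprop _ => True
  | _ => False

/-- A formula of the form `Xφ`. -/
def IsNext : Form → Prop
  | .next _ => True
  | _ => False

/-- Remove a frontal `X`. -/
def unX : Form → Form
  | .next a => a
  | a => a

end Form

/-- The Fischer-Ladner closure of a formula: its subformulas together with
`X(φ U ψ)` for every subformula `φ U ψ` and `X(φ R ψ)` for every subformula `φ R ψ`. -/
def FL (θ : Form) : Finset Form :=
  θ.subf ∪ θ.subf.image (fun ψ =>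
    match ψ with
    | .unt a b => Form.next (.unt a b)
    | .rel a b => Form.next (.rel a b)
    | _ => θ)

/-- A (total) transition system with a designated initial state and a labeling
of states with sets of propositional constants. -/
structure TS (S : Type) where
  init : S
  step : S → S → Prop
  total : ∀ s, ∃ t, step s t
  label : S → Set ℕ

/-- An infinite path through a transition system. -/
structure TS.Path {S : Type} (T : TS S) where
  seq : ℕ → S
  valid : ∀ i, T.step (seq i) (seq (i + 1))

/-- The suffix `π^k` of a path `π`. -/
def TS.Path.suffix {S : Type} {T : TS S} (π : T.Path) (k : ℕ) : T.Path :=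
  ⟨fun i => π.seq (k + i), fun i => π.valid (k + i)⟩

/-- Satisfaction of a branching-time formula on a path of a transition system. -/
def Sat {S : Type} (T : TS S) : T.Path → Form → Prop
  | _, .tt => True
  | _, .ff => False
  | π, .prop p => p ∈ T.label (π.seq 0)
  | π, .nprop p => p ∉ T.label (π.seq 0)
  | π, .or a b => Sat T π a ∨ Sat T π b
  | π, .and a b => Sat T π a ∧ Sat T π b
  | π, .next a => Sat T (π.suffix 1) a
  | π, .unt a b => ∃ k, Sat T (π.suffix k) b ∧ ∀ j < k, Sat T (π.suffix j) a
  | π, .rel a b => ∀ k, Sat T (π.suffix k) b ∨ ∃ j < k, Sat T (π.suffix j) a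
  | π, .ex a => ∃ π' : T.Path, π'.seq 0 = π.seq 0 ∧ Sat T π' a
  | π, .al a => ∀ π' : T.Path, π'.seq 0 = π.seq 0 → Sat T π' a

/-- A state formula: satisfaction only depends on the first state of the path. -/
def IsStateForm (φ : Form) : Prop :=
  ∀ (S : Type) (T : TS S) (π π' : T.Path), π.seq 0 = π'.seq 0 → (Sat T π φ ↔ Sat T π' φ)

/-- A (state) formula is satisfiable if it holds at the initial state of some
transition system. -/
def Satisfiable (φ : Form) : Prop :=
  ∃ (S : Type) (T : TS S) (π : T.Path), π.seq 0 = T.init ∧ Sat T π φ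

/-- Equivalence of branching-time formulas. -/
def FormEquiv (φ ψ : Form) : Prop :=
  ∀ (S : Type) (T : TS S) (π : T.Path), Sat T π φ ↔ Sat T π ψ

/-- The conjunction of a list of formulas. -/
def bigAnd : List Form → Form
  | [] => .tt
  | [φ] => φ
  | φ :: rest => .and φ (bigAnd rest)

/-- The formula `⋀_{i<n} EX(¬p_i ∧ p_{i+1}) ∧ ⋀_{i<n} AX(¬p_i ∨ p_{i+1})`. -/
def branchForm (n : ℕ) (p : ℕ → ℕ) : Form :=
  bigAnd
    (((List.range n).map fun i =>
        Form.ex (.next (.and (.nprop (p i)) (.prop (p (i + 1)))))) ++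
     ((List.range n).map fun i =>
        Form.al (.next (.or (.nprop (p i)) (.prop (p (i + 1)))))))

lemma sat_bigAnd {S : Type} (T : TS S) (π : T.Path) (L : List Form) :
    Sat T π (bigAnd L) ↔ ∀ φ ∈ L, Sat T π φ := by
  induction L with
  | nil => simp [bigAnd, Sat]
  | cons φ L ih =>
    cases L with
    | nil => simp [bigAnd]
    | cons ψ R =>
      show Sat T π (.and φ (bigAnd (ψ :: R))) ↔ _
      simp only [Sat, ih, List.mem_cons]
      constructor
      · rintro ⟨h1, h2⟩ χ (rfl | hχ)
        · exact h1
        · exact h2 χ hχ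
      · intro h
        exact ⟨h φ (Or.inl rfl), fun χ hχ => h χ (Or.inr hχ)⟩

lemma sat_ex_next {S : Type} (T : TS S) (π : T.Path) (a b : ℕ) :
    Sat T π (.ex (.next (.and (.nprop a) (.prop b)))) ↔
      ∃ π' : T.Path, π'.seq 0 = π.seq 0 ∧
        a ∉ T.label (π'.seq 1) ∧ b ∈ T.label (π'.seq 1) := by
  simp [Sat, TS.Path.suffix]

lemma sat_al_next {S : Type} (T : TS S) (π : T.Path) (a b : ℕ) :
    Sat T π (.al (.next (.or (.nprop a) (.prop b)))) ↔
      ∀ π' : T.Path, π'.seq 0 = π.seq 0 →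
        a ∉ T.label (π'.seq 1) ∨ b ∈ T.label (π'.seq 1) := by
  simp [Sat, TS.Path.suffix]

lemma sat_branchForm {S : Type} (T : TS S) (π : T.Path) (n : ℕ) (p : ℕ → ℕ) :
    Sat T π (branchForm n p) ↔
      ((∀ i < n, ∃ π' : T.Path, π'.seq 0 = π.seq 0 ∧
          p i ∉ T.label (π'.seq 1) ∧ p (i + 1) ∈ T.label (π'.seq 1)) ∧
       (∀ i < n, ∀ π' : T.Path, π'.seq 0 = π.seq 0 →
          p i ∉ T.label (π'.seq 1) ∨ p (i + 1) ∈ T.label (π'.seq 1))) := by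
  rw [branchForm, sat_bigAnd]
  constructor
  · intro h
    constructor
    · intro i hi
      have := h _ (by simp only [List.mem_append, List.mem_map, List.mem_range]
                      exact Or.inl ⟨i, hi, rfl⟩)
      rwa [sat_ex_next] at this
    · intro i hi
      have := h _ (by simp only [List.mem_append, List.mem_map, List.mem_range]
                      exact Or.inr ⟨i, hi, rfl⟩)
      rwa [sat_al_next] at this
  · rintro ⟨h1, h2⟩ φ hφ
    simp only [List.mem_append, List.mem_map, List.mem_range] at hφ
    rcases hφ with ⟨i, hi, rfl⟩ | ⟨i, hi, rfl⟩
    · rw [sat_ex_next]; exact h1 i hi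
    · rw [sat_al_next]; exact h2 i hi

lemma chain_label {S : Type} {T : TS S} {π : T.Path} {n : ℕ} {p : ℕ → ℕ}
    (hA : ∀ i < n, ∀ π' : T.Path, π'.seq 0 = π.seq 0 →
        p i ∉ T.label (π'.seq 1) ∨ p (i + 1) ∈ T.label (π'.seq 1))
    (σ : T.Path) (hσ : σ.seq 0 = π.seq 0) :
    ∀ d i, i + d ≤ n → p i ∈ T.label (σ.seq 1) → p (i + d) ∈ T.label (σ.seq 1) := by
  intro d
  induction d with
  | zero => intro i _ h; simpa using h
  | succ d ih =>
    intro i hle h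
    have h1 := ih i (by omega) h
    rcases hA (i + d) (by omega) σ hσ with h2 | h2
    · exact absurd h1 h2
    · have heq : i + (d + 1) = (i + d) + 1 := by omega
      rw [heq]; exact h2

/-- **Claim.** For pairwise distinct propositional constants `p_1, …, p_{n+1}`, the
formula `⋀ EX(¬p_i ∧ p_{i+1}) ∧ ⋀ AX(p_i → p_{i+1})` is a satisfiable CTL* formula
and forces every state satisfying it to have at least `n` distinct successors. -/
theorem branching_width_lower_bound (n : ℕ) (hn : 1 ≤ n) (p : ℕ → ℕ)
    (hp : ∀ i j, i ≤ n → j ≤ n → p i = p j → i = j) :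
    (IsStateForm (branchForm n p) ∧ Satisfiable (branchForm n p)) ∧
    ∀ (S : Type) (T : TS S) (s : S),
      (∃ π : T.Path, π.seq 0 = s ∧ Sat T π (branchForm n p)) →
      ∃ f : Fin n → S, Function.Injective f ∧ ∀ i : Fin n, T.step s (f i) := by
  refine ⟨⟨?_, ?_⟩, ?_⟩
  · -- state formula
    intro S T π π' hseq
    rw [sat_branchForm, sat_branchForm, hseq]
  · -- satisfiable
    refine ⟨ℕ, ⟨0, fun s t => if s = 0 then 1 ≤ t ∧ t ≤ n else t = s, ?_,
        fun k => {m | ∃ j, k ≤ j ∧ j ≤ n ∧ p j = m}⟩, ?_⟩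
    · intro s
      by_cases hs : s = 0
      · exact ⟨1, by simp [hs, hn]⟩
      · exact ⟨s, by simp [hs]⟩
    · refine ⟨⟨fun m => if m = 0 then 0 else 1, ?_⟩, rfl, ?_⟩
      · intro i
        cases i with
        | zero => simp [hn]
        | succ i => simp
      · rw [sat_branchForm]
        constructor
        · intro i hi
          refine ⟨⟨fun m => if m = 0 then 0 else i + 1, ?_⟩, rfl, ?_, ?_⟩
          · intro m
            cases m with
            | zero => simp; omega
            | succ m => simp
          · simp only [TS.label]
            rintro ⟨j, hj1, hj2, hj3⟩
            norm_num at hj1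
            have := hp j i hj2 (by omega) hj3
            omega
          · exact ⟨i + 1, by norm_num, by omega, rfl⟩
        · intro i hi π' hseq
          have hstep := π'.valid 0
          rw [hseq] at hstep
          simp only [TS.step, if_pos rfl] at hstep
          by_cases hle : π'.seq 1 ≤ i + 1
          · right
            exact ⟨i + 1, hle, by omega, rfl⟩
          · left
            rintro ⟨j, hj1, hj2, hj3⟩
            have := hp j i hj2 (by omega) hj3
            omega
  · -- width lower bound
    rintro S T s ⟨π, hπs, hsat⟩
    rw [sat_branchForm] at hsat
    obtain ⟨hE, hA⟩ := hsat
    choose σ hσ0 hnp hpp using hE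
    refine ⟨fun i => (σ i.val i.2).seq 1, ?_, ?_⟩
    · have key : ∀ i j : Fin n, i.val < j.val →
          (σ i.val i.2).seq 1 ≠ (σ j.val j.2).seq 1 := by
        intro i j hij heq
        have h1 : p (i.val + 1) ∈ T.label ((σ i.val i.2).seq 1) := hpp i.val i.2
        have h2 := chain_label hA (σ i.val i.2) (hσ0 i.val i.2)
          (j.val - (i.val + 1)) (i.val + 1) (by omega) h1
        have hje : i.val + 1 + (j.val - (i.val + 1)) = j.val := by omega
        rw [hje, heq] at h2
        exact hnp j.val j.2 h2
      intro i j heq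
      rcases lt_trichotomy i.val j.val with h | h | h
      · exact absurd heq (key i j h)
      · exact Fin.ext h
      · exact absurd heq.symm (key j i h)
    · intro i
      have := (σ i.val i.2).valid 0
      rwa [hσ0 i.val i.2, hπs] at this
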